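/- arXiv:math/0410115 — 4 statements merged into one kernel-verified Lean document; each statement's English description precedes it below -/
import Mathlib

section
/- Let u be a utility function. Then the asymptotic elasticity AE(u) = limsup_{x→∞} x·u'(x)/u(x) satisfies: AE(u) ∈ [0,1] if u(∞) = ∞; AE(u) = 0 if 0 < u(∞) < ∞; and AE(u) ∈ [−∞, 0] if −∞ < u(∞) ≤ 0. -/
open MeasureTheory Filter Set Topology
open scoped ENNReal

noncomputable section

/-- A utility function: strictly concave, strictly increasing, continuously
differentiable on `(0,∞)`, with `u'(0+) = ∞` and `u'(∞) = 0`. -/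
def IsUtility (u : ℝ → ℝ) : Prop :=
  StrictConcaveOn ℝ (Set.Ioi 0) u ∧
  StrictMonoOn u (Set.Ioi 0) ∧
  (∀ x ∈ Set.Ioi (0:ℝ), DifferentiableAt ℝ u x) ∧
  ContinuousOn (deriv u) (Set.Ioi 0) ∧
  Tendsto (deriv u) (nhdsWithin 0 (Set.Ioi 0)) atTop ∧
  Tendsto (deriv u) atTop (nhds 0)

/-- The convex dual `u*(y) = sup_{x>0} (u x - y x)`. -/
def ustar (u : ℝ → ℝ) (y : ℝ) : ℝ := sSup ((fun x => u x - y * x) '' Set.Ioi 0)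

/-- `u(∞) = lim_{x→∞} u x`, as an extended real (supremum over `x > 0`). -/
def uTop (u : ℝ → ℝ) : EReal := ⨆ x ∈ Set.Ioi (0:ℝ), (u x : EReal)

/-- Asymptotic elasticity `AE(u) = limsup_{x→∞} x u'(x) / u(x)` (in `EReal`). -/
def AEu (u : ℝ → ℝ) : EReal :=
  Filter.limsup (fun x : ℝ => ((x * deriv u x / u x : ℝ) : EReal)) Filter.atTop

variable {Ω : Type*} [MeasurableSpace Ω]

/-- An extended-real-valued integral: positive part minus negative part. -/
def eInt (μ : Measure Ω) (g : Ω → ℝ) : EReal :=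
  ((∫⁻ x, ENNReal.ofReal (g x) ∂μ : ℝ≥0∞) : EReal)
    - ((∫⁻ x, ENNReal.ofReal (-(g x)) ∂μ : ℝ≥0∞) : EReal)

/-- `f` is a density on `(Ω, Σ, μ)`. -/
def IsDensity (μ : Measure Ω) (f : Ω → ℝ) : Prop :=
  Measurable f ∧ (∀ x, 0 ≤ f x) ∧ Integrable f μ ∧ ∫ x, f x ∂μ = 1

/-- The admissible class `A(f)`: densities `w` with `u(w)⁻ ∈ L¹(fμ)`. -/
def Adm (μ : Measure Ω) (u : ℝ → ℝ) (f : Ω → ℝ) : Set (Ω → ℝ) :=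
  {w | IsDensity μ w ∧ Integrable (fun x => max (-(u (w x))) 0 * f x) μ}

/-- `N_u(f) = sup_{w ∈ A(f)} ∫ u(w) f dμ`, valued in `EReal`. -/
def Nu (μ : Measure Ω) (u : ℝ → ℝ) (f : Ω → ℝ) : EReal :=
  ⨆ w ∈ Adm μ u f, eInt μ (fun x => u (w x) * f x)

/-- The utility maximizing entropy `H_u(f) = ln u⁻¹(N_u(f))`, valued in `[0,∞]`;
it is `⊤` when `N_u(f)` is not dominated by any value `u x`, `x > 0`. -/
def Hu (μ : Measure Ω) (u : ℝ → ℝ) (f : Ω → ℝ) : EReal :=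
  sInf {y : EReal | ∃ x : ℝ, 0 < x ∧ Nu μ u f ≤ (u x : EReal) ∧ y = (Real.log x : EReal)}



/-- Derivative of a utility function is positive on `(0,∞)`. -/
lemma util_deriv_pos {u : ℝ → ℝ} (hu : IsUtility u) {x : ℝ} (hx : 0 < x) :
    0 < deriv u x := by
  obtain ⟨hcc, hm, hd, -⟩ := hu
  have h := hcc.concaveOn.slope_le_deriv (Set.mem_Ioi.2 hx)
    (Set.mem_Ioi.2 (by linarith : (0:ℝ) < x + 1)) (lt_add_one x) (hd x hx)
  rw [slope_def_field] at h
  have : 0 < (u (x+1) - u x) / (x + 1 - x) := by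
    apply div_pos (sub_pos.2 (hm (Set.mem_Ioi.2 hx) (Set.mem_Ioi.2 (by linarith)) (lt_add_one x)))
    linarith
  linarith

/-- Concavity: derivative at `y` is bounded by the slope from `x`. -/
lemma util_deriv_le_slope {u : ℝ → ℝ} (hu : IsUtility u) {x y : ℝ} (hx : 0 < x) (hxy : x < y) :
    deriv u y ≤ (u y - u x) / (y - x) := by
  obtain ⟨hcc, -, hd, -⟩ := hu
  have h := hcc.concaveOn.deriv_le_slope (Set.mem_Ioi.2 hx)
    (Set.mem_Ioi.2 (hx.trans hxy)) hxy (hd y (hx.trans hxy))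
  rwa [slope_def_field] at h

set_option maxHeartbeats 1000000

/-- the range of the asymptotic elasticity depends on `u(∞)`. -/
theorem asymptotic_elasticity_range (u : ℝ → ℝ) (hu : IsUtility u) :
    (Tendsto u atTop atTop → AEu u ∈ Set.Icc (0 : EReal) 1) ∧
    (∀ L : ℝ, Tendsto u atTop (nhds L) → 0 < L → AEu u = 0) ∧
    (∀ L : ℝ, Tendsto u atTop (nhds L) → L ≤ 0 → AEu u ≤ 0) := by
  constructor
  · -- Case u(∞) = ∞
    intro hinf
    have hev1 : ∀ᶠ x : ℝ in atTop, 1 ≤ u x := hinf.eventually_ge_atTop 1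
    constructor
    · -- 0 ≤ AEu
      refine Filter.le_limsup_of_frequently_le ?_
      refine ((hev1.and (eventually_ge_atTop 1)).mono ?_).frequently
      rintro x ⟨hux, hx1⟩
      have h0x : (0:ℝ) < x := lt_of_lt_of_le one_pos hx1
      have : (0:ℝ) ≤ x * deriv u x / u x :=
        div_nonneg (mul_nonneg h0x.le (util_deriv_pos hu h0x).le) (by linarith)
      exact EReal.coe_le_coe_iff.2 this
    · -- AEu ≤ 1
      set g : ℝ → ℝ := fun x => (x / (x - 1)) * (1 - u 1 / u x) with hg_def
      have hg : Tendsto g atTop (nhds 1) := by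
        have h1 : Tendsto (fun x : ℝ => x / (x - 1)) atTop (nhds 1) := by
          have heq : ∀ᶠ x : ℝ in atTop, 1 + 1 / (x - 1) = x / (x - 1) := by
            filter_upwards [eventually_gt_atTop (1:ℝ)] with x hx
            have hne : x - 1 ≠ 0 := sub_ne_zero.2 hx.ne'
            field_simp
            ring
          have : Tendsto (fun x : ℝ => 1 + 1 / (x - 1)) atTop (nhds (1 + 0)) := by
            refine tendsto_const_nhds.add ?_
            simpa [one_div, sub_eq_add_neg, Function.comp_def] using
              tendsto_inv_atTop_zero.comp (tendsto_atTop_add_const_right atTop (-1) tendsto_id)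
          rw [add_zero] at this
          exact Tendsto.congr' heq this
        have h2 : Tendsto (fun x : ℝ => 1 - u 1 / u x) atTop (nhds (1 - 0)) :=
          tendsto_const_nhds.sub (Tendsto.div_atTop tendsto_const_nhds hinf)
        rw [sub_zero] at h2
        exact (one_mul (1:ℝ)) ▸ h1.mul h2
      have hev : ∀ᶠ x : ℝ in atTop,
          ((x * deriv u x / u x : ℝ) : EReal) ≤ ((g x : ℝ) : EReal) := by
        filter_upwards [hev1, eventually_gt_atTop (1:ℝ)] with x hux hx1
        have h0x : (0:ℝ) < x := lt_trans one_pos hx1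
        have hux0 : (0:ℝ) < u x := lt_of_lt_of_le one_pos hux
        have hslope := util_deriv_le_slope hu one_pos hx1
        have : x * deriv u x / u x ≤ g x := by
          have step : x * deriv u x / u x ≤ x * ((u x - u 1) / (x - 1)) / u x := by
            gcongr
          refine step.trans_eq ?_
          rw [hg_def]
          field_simp
        exact EReal.coe_le_coe_iff.2 this
      have hglim : Filter.limsup (fun x : ℝ => ((g x : ℝ) : EReal)) atTop = (1 : EReal) := by
        have : Tendsto (fun x : ℝ => ((g x : ℝ) : EReal)) atTop (nhds ((1:ℝ) : EReal)) :=
          EReal.tendsto_coe.2 hg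
        simpa using this.limsup_eq
      calc AEu u ≤ Filter.limsup (fun x : ℝ => ((g x : ℝ) : EReal)) atTop :=
            Filter.limsup_le_limsup hev
        _ = 1 := hglim
  constructor
  · -- Case 0 < L < ∞
    intro L hL hLpos
    have hhalf : Tendsto (fun x : ℝ => u (x / 2)) atTop (nhds L) :=
      hL.comp (tendsto_id.atTop_div_const two_pos)
    have hnum : Tendsto (fun x : ℝ => x * deriv u x) atTop (nhds 0) := by
      have hupper : Tendsto (fun x : ℝ => 2 * (u x - u (x / 2))) atTop (nhds 0) := by
        have := (hL.sub hhalf).const_mul 2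
        simpa using this
      refine tendsto_of_tendsto_of_tendsto_of_le_of_le' tendsto_const_nhds hupper ?_ ?_
      · filter_upwards [eventually_gt_atTop (0:ℝ)] with x hx
        exact mul_nonneg hx.le (util_deriv_pos hu hx).le
      · filter_upwards [eventually_gt_atTop (0:ℝ)] with x hx
        have hhalfpos : (0:ℝ) < x / 2 := by linarith
        have hlt : x / 2 < x := by linarith
        have hslope := util_deriv_le_slope hu hhalfpos hlt
        have step : x * deriv u x ≤ x * ((u x - u (x / 2)) / (x - x / 2)) := by
          gcongr
        have hx0 : x ≠ 0 := ne_of_gt hx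
        refine step.trans_eq ?_
        rw [show x - x / 2 = x / 2 by ring, div_div_eq_mul_div, mul_div_assoc',
          mul_div_cancel_left₀ _ hx0, mul_comm]
    have hf : Tendsto (fun x : ℝ => x * deriv u x / u x) atTop (nhds 0) := by
      have := hnum.div hL (ne_of_gt hLpos)
      rw [zero_div] at this
      exact this
    have : Tendsto (fun x : ℝ => ((x * deriv u x / u x : ℝ) : EReal)) atTop
        (nhds ((0:ℝ) : EReal)) := EReal.tendsto_coe.2 hf
    simpa [AEu] using this.limsup_eq
  · -- Case -∞ < L ≤ 0
    intro L hL hLle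
    have hm := hu.2.1
    have hult : ∀ x : ℝ, 0 < x → u x < 0 := by
      intro x hx
      have h1 : u (x + 1) ≤ L := by
        refine ge_of_tendsto hL ?_
        filter_upwards [eventually_ge_atTop (x + 1)] with y hy
        rcases eq_or_lt_of_le hy with rfl | hlt
        · exact le_refl _
        · exact (hm (Set.mem_Ioi.2 (by linarith)) (Set.mem_Ioi.2 (by linarith)) hlt).le
      have h2 : u x < u (x + 1) :=
        hm (Set.mem_Ioi.2 hx) (Set.mem_Ioi.2 (by linarith)) (lt_add_one x)
      linarith
    have hev : ∀ᶠ x : ℝ in atTop,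
        ((x * deriv u x / u x : ℝ) : EReal) ≤ ((0 : ℝ) : EReal) := by
      filter_upwards [eventually_gt_atTop (0:ℝ)] with x hx
      have : x * deriv u x / u x ≤ 0 :=
        div_nonpos_of_nonneg_of_nonpos (mul_nonneg hx.le (util_deriv_pos hu hx).le)
          (hult x hx).le
      exact EReal.coe_le_coe_iff.2 this
    calc AEu u ≤ Filter.limsup (fun _ : ℝ => ((0:ℝ) : EReal)) atTop :=
          Filter.limsup_le_limsup hev
      _ = ((0:ℝ) : EReal) := Filter.limsup_const _
      _ = (0 : EReal) := by simp


end
end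

section
/- Let u be a utility function with u(∞) > 0 and AE(u) < γ < 1. Then there exists x₀ > 0 such that 0 < u(λx) ≤ λ^γ · u(x) for all λ ≥ 1 and all x ≥ x₀. -/
open MeasureTheory Filter Set Topology
open scoped ENNReal

noncomputable section

variable {Ω : Type*} [MeasurableSpace Ω]

/-- if `u(∞) > 0` and `AE(u) < γ < 1`, then there is `x₀ > 0` with
`0 < u(λ x) ≤ λ^γ u(x)` for all `λ ≥ 1` and `x ≥ x₀`. -/
theorem asymptotic_elasticity_growth (u : ℝ → ℝ) (γ : ℝ) (hu : IsUtility u)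
    (hpos : ∃ x > (0:ℝ), 0 < u x) (hAE : AEu u < (γ : EReal)) (hγ : γ < 1) :
    ∃ x₀ > (0:ℝ), ∀ lam ≥ (1:ℝ), ∀ x ≥ x₀,
      0 < u (lam * x) ∧ u (lam * x) ≤ lam ^ γ * u x := by
  obtain ⟨a, ha, hua⟩ := hpos
  obtain ⟨hconc, hmono, hdiff, hcont, _, _⟩ := hu
  have hev : ∀ᶠ x in atTop, ((x * deriv u x / u x : ℝ) : EReal) < (γ : EReal) :=
    Filter.eventually_lt_of_limsup_lt hAE
  obtain ⟨x₁, hx₁⟩ := eventually_atTop.1 hev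
  refine ⟨max a x₁, lt_of_lt_of_le ha (le_max_left _ _), ?_⟩
  have hx₀pos : (0:ℝ) < max a x₁ := lt_of_lt_of_le ha (le_max_left _ _)
  -- u is positive on [x₀, ∞)
  have hupos : ∀ s, max a x₁ ≤ s → 0 < u s := by
    intro s hs
    have has : a ≤ s := le_trans (le_max_left _ _) hs
    rcases eq_or_lt_of_le has with h | h
    · rwa [← h]
    · exact hua.trans_le (hmono (mem_Ioi.2 ha) (mem_Ioi.2 (ha.trans h)) h).le
  -- key derivative bound
  have hkey : ∀ s, max a x₁ ≤ s → s * deriv u s < γ * u s := by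
    intro s hs
    have h1 := hx₁ s (le_trans (le_max_right _ _) hs)
    have h1' : s * deriv u s / u s < γ := by exact_mod_cast h1
    have hus : 0 < u s := hupos s hs
    have := mul_lt_mul_of_pos_right h1' hus
    rwa [div_mul_cancel₀ _ hus.ne'] at this
  intro lam hlam x hx
  have hx0 : 0 < x := lt_of_lt_of_le hx₀pos hx
  have hxlam : x ≤ lam * x := le_mul_of_one_le_left hx0.le hlam
  have hlx0 : max a x₁ ≤ lam * x := hx.trans hxlam
  have hulam : 0 < u (lam * x) := hupos _ hlx0
  refine ⟨hulam, ?_⟩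
  -- F t = u (t*x) / t ^ γ is antitone on [1, ∞)
  set F : ℝ → ℝ := fun t => u (t * x) / t ^ γ with hFdef
  have hF : ∀ t ∈ Set.Ici (1:ℝ), HasDerivAt F
      ((deriv u (t*x) * x * t ^ γ - u (t*x) * (γ * t ^ (γ-1))) / (t ^ γ)^2) t := by
    intro t ht
    have ht0 : (0:ℝ) < t := lt_of_lt_of_le one_pos ht
    have htx : 0 < t * x := mul_pos ht0 hx0
    have hm : HasDerivAt (fun s : ℝ => s * x) x t := hasDerivAt_mul_const x
    have hd : HasDerivAt u (deriv u (t*x)) (t*x) := (hdiff _ (mem_Ioi.2 htx)).hasDerivAt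
    have h1 : HasDerivAt (fun s => u (s * x)) (deriv u (t*x) * x) t := hd.comp t hm
    have h2 : HasDerivAt (fun s : ℝ => s ^ γ) (γ * t ^ (γ-1)) t :=
      Real.hasDerivAt_rpow_const (Or.inl ht0.ne')
    exact h1.div h2 (Real.rpow_pos_of_pos ht0 γ).ne'
  have hanti : AntitoneOn F (Set.Ici 1) := by
    apply antitoneOn_of_deriv_nonpos (convex_Ici 1)
    · exact fun t ht => (hF t ht).continuousAt.continuousWithinAt
    · intro t ht
      rw [interior_Ici] at ht
      exact (hF t (Set.mem_Ici.2 (le_of_lt ht))).differentiableAt.differentiableWithinAt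
    · intro t ht
      rw [interior_Ici] at ht
      have ht0 : (0:ℝ) < t := lt_trans one_pos ht
      rw [(hF t (Set.mem_Ici.2 ht.le)).deriv]
      have hnum : deriv u (t*x) * x * t ^ γ - u (t*x) * (γ * t ^ (γ-1)) ≤ 0 := by
        have hk : (t * x) * deriv u (t*x) < γ * u (t*x) :=
          hkey _ (hx.trans (le_mul_of_one_le_left hx0.le ht.le))
        have hpow : t ^ γ = t ^ (γ-1) * t := by
          rw [← Real.rpow_add_one ht0.ne' (γ-1)]; ring_nf
        have hp1 : (0:ℝ) < t ^ (γ-1) := Real.rpow_pos_of_pos ht0 _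
        calc deriv u (t*x) * x * t ^ γ - u (t*x) * (γ * t ^ (γ-1))
            = t ^ (γ-1) * ((t * x) * deriv u (t*x) - γ * u (t*x)) := by rw [hpow]; ring
          _ ≤ 0 := mul_nonpos_of_nonneg_of_nonpos hp1.le (by linarith)
      exact div_nonpos_of_nonpos_of_nonneg hnum (sq_nonneg _)
  have hle := hanti (Set.self_mem_Ici) (Set.mem_Ici.2 hlam) hlam
  have : u (lam * x) / lam ^ γ ≤ u x := by
    simpa [hFdef, Real.one_rpow] using hle
  have hlamγ : (0:ℝ) < lam ^ γ := Real.rpow_pos_of_pos (lt_of_lt_of_le one_pos hlam) γ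
  calc u (lam * x) = (u (lam * x) / lam ^ γ) * lam ^ γ := by field_simp
    _ ≤ u x * lam ^ γ := mul_le_mul_of_nonneg_right this hlamγ.le
    _ = lam ^ γ * u x := mul_comm _ _


end
end

section
/- Let u be a utility function, f₁, f₂ densities on a probability space (Ω, Σ, μ), and a ∈ [0,1]. Then N_u(a f₁ + (1−a) f₂) ≤ a·N_u(f₁) + (1−a)·N_u(f₂); i.e., N_u is convex on densities. -/
open MeasureTheory Filter Set Topology
open scoped ENNReal

noncomputable section

variable {Ω : Type*} [MeasurableSpace Ω]

lemma utility_comp_measurable {u : ℝ → ℝ}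
    (hcont : ContinuousOn u (Set.Ioi 0)) {w : Ω → ℝ} (hw : Measurable w)
    (hw0 : ∀ x, 0 ≤ w x) : Measurable fun x => u (w x) := by
  classical
  have hU : Measurable fun y : ℝ => if h : y ∈ Set.Ioi (0:ℝ) then u y else u 0 :=
    Measurable.dite (s := Set.Ioi (0:ℝ)) (f := fun y : Set.Ioi (0:ℝ) => u y)
      (hcont.restrict).measurable (g := fun _ => u 0) measurable_const measurableSet_Ioi
  have : (fun x => u (w x)) = (fun y : ℝ => if h : y ∈ Set.Ioi (0:ℝ) then u y else u 0) ∘ w := by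
    funext x
    rcases (hw0 x).lt_or_eq with h | h
    · simp [Set.mem_Ioi, h]
    · simp [Set.mem_Ioi, ← h]
  rw [this]
  exact hU.comp hw

lemma aux_mul_sub (a : ℝ) (ha : 0 < a) (P : ℝ≥0∞) (n : ℝ) :
    (a : EReal) * (P : EReal) - ((a * n : ℝ) : EReal) = (a : EReal) * ((P : EReal) - (n : ℝ)) := by
  induction P using ENNReal.recTopCoe with
  | top =>
    rw [EReal.coe_ennreal_top, EReal.mul_top_of_pos (by exact_mod_cast ha), EReal.top_sub_coe,
      EReal.top_sub_coe, EReal.mul_top_of_pos (by exact_mod_cast ha)]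
  | coe p =>
    have : ((p : ℝ≥0∞) : EReal) = ((p : ℝ) : EReal) := rfl
    rw [this, ← EReal.coe_mul, ← EReal.coe_sub, ← EReal.coe_sub, ← EReal.coe_mul]
    norm_cast
    ring


/-- convexity of `N_u` on densities. -/
theorem Nu_convex (μ : Measure Ω) [IsProbabilityMeasure μ]
    (u : ℝ → ℝ) (f₁ f₂ : Ω → ℝ) (a : ℝ) (hu : IsUtility u)
    (hf₁ : IsDensity μ f₁) (hf₂ : IsDensity μ f₂) (ha : a ∈ Set.Icc (0:ℝ) 1) :
    Nu μ u (fun x => a * f₁ x + (1 - a) * f₂ x)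
      ≤ (a : EReal) * Nu μ u f₁ + ((1 - a : ℝ) : EReal) * Nu μ u f₂ := by
  obtain ⟨ha0, ha1⟩ := ha
  by_cases h0 : a = 0
  · subst h0
    have he : (fun x => (0:ℝ) * f₁ x + (1-0) * f₂ x) = f₂ := by funext x; ring
    rw [he]
    simp
  by_cases h1 : a = 1
  · subst h1
    have he : (fun x => (1:ℝ) * f₁ x + (1-1) * f₂ x) = f₁ := by funext x; ring
    rw [he]
    simp
  have hap : 0 < a := lt_of_le_of_ne ha0 (Ne.symm h0)
  have hbp : 0 < 1 - a := by
    rcases lt_of_le_of_ne ha1 h1 with h; linarith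
  set b := 1 - a with hb
  refine iSup₂_le fun w hw => ?_
  obtain ⟨⟨hwm, hw0, hwi, hws⟩, hwint⟩ := hw
  have hcont : ContinuousOn u (Set.Ioi 0) := fun x hx =>
    ((hu.2.2.1 x hx).continuousAt).continuousWithinAt
  have muw : Measurable fun x => u (w x) := utility_comp_measurable hcont hwm hw0
  set c : Ω → ℝ := fun x => u (w x) with hc
  set comb : Ω → ℝ := fun x => a * f₁ x + b * f₂ x with hcombdef
  -- admissibility wrt f₁ and f₂
  have key : ∀ (t : ℝ), 0 < t → ∀ f : Ω → ℝ, Measurable f → (∀ x, 0 ≤ f x) →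
      (∀ x, t * f x ≤ comb x) → Integrable (fun x => max (-(u (w x))) 0 * f x) μ := by
    intro t ht f hfm hfnn hble
    have hmeas : AEStronglyMeasurable (fun x => max (-(u (w x))) 0 * f x) μ :=
      ((muw.neg.max measurable_const).mul hfm).aestronglyMeasurable
    refine (hwint.const_mul (1/t)).mono hmeas (Filter.Eventually.of_forall fun x => ?_)
    have h1 : 0 ≤ max (-(u (w x))) 0 := le_max_right _ _
    have hcombnn : 0 ≤ comb x := le_trans (mul_nonneg ht.le (hfnn x)) (hble x)
    have hf' : f x ≤ 1/t * comb x := by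
      rw [one_div, ← div_eq_inv_mul, le_div_iff₀ ht]
      calc f x * t = t * f x := mul_comm _ _
        _ ≤ comb x := hble x
    rw [Real.norm_eq_abs, Real.norm_eq_abs, abs_of_nonneg (mul_nonneg h1 (hfnn x)),
      abs_of_nonneg (by positivity)]
    calc max (-(u (w x))) 0 * f x ≤ max (-(u (w x))) 0 * (1/t * comb x) :=
          mul_le_mul_of_nonneg_left hf' h1
      _ = 1/t * (max (-(u (w x))) 0 * comb x) := by ring
  have hA1 : w ∈ Adm μ u f₁ :=
    ⟨⟨hwm, hw0, hwi, hws⟩, key a hap f₁ hf₁.1 hf₁.2.1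
      (fun x => le_add_of_nonneg_right (mul_nonneg hbp.le (hf₂.2.1 x)))⟩
  have hA2 : w ∈ Adm μ u f₂ :=
    ⟨⟨hwm, hw0, hwi, hws⟩, key b hbp f₂ hf₂.1 hf₂.2.1
      (fun x => le_add_of_nonneg_left (mul_nonneg hap.le (hf₁.2.1 x)))⟩
  -- notations for positive/negative parts
  set P₁ := ∫⁻ x, ENNReal.ofReal (u (w x) * f₁ x) ∂μ with hP₁
  set P₂ := ∫⁻ x, ENNReal.ofReal (u (w x) * f₂ x) ∂μ with hP₂
  set N₁ := ∫⁻ x, ENNReal.ofReal (-(u (w x) * f₁ x)) ∂μ with hN₁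
  set N₂ := ∫⁻ x, ENNReal.ofReal (-(u (w x) * f₂ x)) ∂μ with hN₂
  -- finiteness of negative parts
  have hNfin : ∀ f : Ω → ℝ, (∀ x, 0 ≤ f x) →
      Integrable (fun x => max (-(u (w x))) 0 * f x) μ →
      (∫⁻ x, ENNReal.ofReal (-(u (w x) * f x)) ∂μ) < ⊤ := by
    intro f hfnn hint
    have heq : ∀ x, ENNReal.ofReal (-(u (w x) * f x))
        = ENNReal.ofReal (max (-(u (w x))) 0 * f x) := by
      intro x
      rcases le_or_gt (u (w x)) 0 with h | h
      · congr 1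
        rw [max_eq_left (by linarith)]
        ring
      · rw [ENNReal.ofReal_of_nonpos (by nlinarith [hfnn x]),
          max_eq_right (by linarith), zero_mul, ENNReal.ofReal_zero]
    rw [lintegral_congr heq]
    exact (hasFiniteIntegral_iff_ofReal
      (Filter.Eventually.of_forall fun x => mul_nonneg (le_max_right _ _) (hfnn x))).1 hint.2
  have hN₁fin : N₁ ≠ ⊤ := (hNfin f₁ hf₁.2.1 hA1.2).ne
  have hN₂fin : N₂ ≠ ⊤ := (hNfin f₂ hf₂.2.1 hA2.2).ne
  -- splitting of the positive part
  have hmeas₁ : Measurable fun x => ENNReal.ofReal (a * (u (w x) * f₁ x)) :=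
    (((muw.mul hf₁.1).const_mul a)).ennreal_ofReal
  have hmeas₂ : Measurable fun x => ENNReal.ofReal (b * (u (w x) * f₂ x)) :=
    (((muw.mul hf₂.1).const_mul b)).ennreal_ofReal
  have hmeas₁' : Measurable fun x => ENNReal.ofReal (a * (-(u (w x) * f₁ x))) :=
    (((muw.mul hf₁.1).neg.const_mul a)).ennreal_ofReal
  have hmeas₂' : Measurable fun x => ENNReal.ofReal (b * (-(u (w x) * f₂ x))) :=
    (((muw.mul hf₂.1).neg.const_mul b)).ennreal_ofReal
  have hsplitP : (∫⁻ x, ENNReal.ofReal (u (w x) * comb x) ∂μ)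
      = ENNReal.ofReal a * P₁ + ENNReal.ofReal b * P₂ := by
    have hpt : ∀ x, ENNReal.ofReal (u (w x) * comb x)
        = ENNReal.ofReal (a * (u (w x) * f₁ x)) + ENNReal.ofReal (b * (u (w x) * f₂ x)) := by
      intro x
      rcases le_or_gt 0 (u (w x)) with h | h
      · rw [show u (w x) * comb x = a * (u (w x) * f₁ x) + b * (u (w x) * f₂ x) by
          simp only [hcombdef]; ring]
        exact ENNReal.ofReal_add (mul_nonneg hap.le (mul_nonneg h (hf₁.2.1 x)))
          (mul_nonneg hbp.le (mul_nonneg h (hf₂.2.1 x)))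
      · have hcombnn : 0 ≤ comb x :=
          add_nonneg (mul_nonneg hap.le (hf₁.2.1 x)) (mul_nonneg hbp.le (hf₂.2.1 x))
        rw [ENNReal.ofReal_of_nonpos (mul_nonpos_of_nonpos_of_nonneg h.le hcombnn),
          ENNReal.ofReal_of_nonpos (mul_nonpos_of_nonneg_of_nonpos hap.le
            (mul_nonpos_of_nonpos_of_nonneg h.le (hf₁.2.1 x))),
          ENNReal.ofReal_of_nonpos (mul_nonpos_of_nonneg_of_nonpos hbp.le
            (mul_nonpos_of_nonpos_of_nonneg h.le (hf₂.2.1 x)))]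
        simp
    rw [lintegral_congr hpt, lintegral_add_left hmeas₁]
    simp_rw [ENNReal.ofReal_mul hap.le, ENNReal.ofReal_mul hbp.le]
    rw [lintegral_const_mul _ (show Measurable fun x => ENNReal.ofReal (u (w x) * f₁ x) from (muw.mul hf₁.1).ennreal_ofReal),
      lintegral_const_mul _ (show Measurable fun x => ENNReal.ofReal (u (w x) * f₂ x) from (muw.mul hf₂.1).ennreal_ofReal)]
  have hsplitN : (∫⁻ x, ENNReal.ofReal (-(u (w x) * comb x)) ∂μ)
      = ENNReal.ofReal a * N₁ + ENNReal.ofReal b * N₂ := by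
    have hpt : ∀ x, ENNReal.ofReal (-(u (w x) * comb x))
        = ENNReal.ofReal (a * (-(u (w x) * f₁ x))) + ENNReal.ofReal (b * (-(u (w x) * f₂ x))) := by
      intro x
      rcases le_or_gt (u (w x)) 0 with h | h
      · rw [show -(u (w x) * comb x) = a * (-(u (w x) * f₁ x)) + b * (-(u (w x) * f₂ x)) by
          simp only [hcombdef]; ring]
        exact ENNReal.ofReal_add
          (mul_nonneg hap.le (neg_nonneg.2 (mul_nonpos_of_nonpos_of_nonneg h (hf₁.2.1 x))))
          (mul_nonneg hbp.le (neg_nonneg.2 (mul_nonpos_of_nonpos_of_nonneg h (hf₂.2.1 x))))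
      · have hcombnn : 0 ≤ comb x :=
          add_nonneg (mul_nonneg hap.le (hf₁.2.1 x)) (mul_nonneg hbp.le (hf₂.2.1 x))
        rw [ENNReal.ofReal_of_nonpos (neg_nonpos.2 (mul_nonneg h.le hcombnn)),
          ENNReal.ofReal_of_nonpos (mul_nonpos_of_nonneg_of_nonpos hap.le
            (neg_nonpos.2 (mul_nonneg h.le (hf₁.2.1 x)))),
          ENNReal.ofReal_of_nonpos (mul_nonpos_of_nonneg_of_nonpos hbp.le
            (neg_nonpos.2 (mul_nonneg h.le (hf₂.2.1 x))))]
        simp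
    rw [lintegral_congr hpt, lintegral_add_left hmeas₁']
    simp_rw [ENNReal.ofReal_mul hap.le, ENNReal.ofReal_mul hbp.le]
    rw [lintegral_const_mul _ (show Measurable fun x => ENNReal.ofReal (-(u (w x) * f₁ x)) from (muw.mul hf₁.1).neg.ennreal_ofReal),
      lintegral_const_mul _ (show Measurable fun x => ENNReal.ofReal (-(u (w x) * f₂ x)) from (muw.mul hf₂.1).neg.ennreal_ofReal)]
  -- pass to EReal
  set n₁ := N₁.toReal with hn₁
  set n₂ := N₂.toReal with hn₂
  have hn₁nn : 0 ≤ n₁ := ENNReal.toReal_nonneg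
  have hn₂nn : 0 ≤ n₂ := ENNReal.toReal_nonneg
  have hN₁e : ((N₁ : ℝ≥0∞) : EReal) = ((n₁ : ℝ) : EReal) := by
    rw [hn₁, ← ENNReal.ofReal_toReal hN₁fin, EReal.coe_ennreal_ofReal,
      max_eq_left ENNReal.toReal_nonneg, ENNReal.toReal_ofReal ENNReal.toReal_nonneg]
  have hN₂e : ((N₂ : ℝ≥0∞) : EReal) = ((n₂ : ℝ) : EReal) := by
    rw [hn₂, ← ENNReal.ofReal_toReal hN₂fin, EReal.coe_ennreal_ofReal,
      max_eq_left ENNReal.toReal_nonneg, ENNReal.toReal_ofReal ENNReal.toReal_nonneg]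
  have hae : ((ENNReal.ofReal a : ℝ≥0∞) : EReal) = (a : EReal) := by
    rw [EReal.coe_ennreal_ofReal, max_eq_left hap.le]
  have hbe : ((ENNReal.ofReal b : ℝ≥0∞) : EReal) = (b : EReal) := by
    rw [EReal.coe_ennreal_ofReal, max_eq_left hbp.le]
  have hE₁ : eInt μ (fun x => u (w x) * f₁ x) = (P₁ : EReal) - ((n₁ : ℝ) : EReal) := by
    rw [eInt, ← hP₁, ← hN₁, hN₁e]
  have hE₂ : eInt μ (fun x => u (w x) * f₂ x) = (P₂ : EReal) - ((n₂ : ℝ) : EReal) := by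
    rw [eInt, ← hP₂, ← hN₂, hN₂e]
  have hNu₁ : (P₁ : EReal) - ((n₁ : ℝ) : EReal) ≤ Nu μ u f₁ := by
    rw [← hE₁]
    exact le_iSup₂ (f := fun w _ => eInt μ fun x => u (w x) * f₁ x) w hA1
  have hNu₂ : (P₂ : EReal) - ((n₂ : ℝ) : EReal) ≤ Nu μ u f₂ := by
    rw [← hE₂]
    exact le_iSup₂ (f := fun w _ => eInt μ fun x => u (w x) * f₂ x) w hA2
  -- compute the left-hand side
  have hLHS : eInt μ (fun x => u (w x) * comb x)
      = (a : EReal) * ((P₁ : EReal) - ((n₁ : ℝ) : EReal))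
        + (b : EReal) * ((P₂ : EReal) - ((n₂ : ℝ) : EReal)) := by
    rw [eInt, hsplitP, hsplitN, EReal.coe_ennreal_add, EReal.coe_ennreal_add,
      EReal.coe_ennreal_mul, EReal.coe_ennreal_mul, EReal.coe_ennreal_mul,
      EReal.coe_ennreal_mul, hae, hbe, hN₁e, hN₂e, ← EReal.coe_mul, ← EReal.coe_mul]
    rw [← aux_mul_sub a hap P₁ n₁, ← aux_mul_sub b hbp P₂ n₂]
    rw [sub_eq_add_neg, sub_eq_add_neg, sub_eq_add_neg, ← EReal.coe_add, ← EReal.coe_neg,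
      show -(a * n₁ + b * n₂) = -(a * n₁) + -(b * n₂) by ring, EReal.coe_add,
      EReal.coe_neg, EReal.coe_neg]
    exact add_add_add_comm _ _ _ _
  calc eInt μ (fun x => u (w x) * comb x)
      = (a : EReal) * ((P₁ : EReal) - ((n₁ : ℝ) : EReal))
        + (b : EReal) * ((P₂ : EReal) - ((n₂ : ℝ) : EReal)) := hLHS
    _ ≤ (a : EReal) * Nu μ u f₁ + (b : EReal) * Nu μ u f₂ :=
        add_le_add (mul_le_mul_of_nonneg_left hNu₁ (by exact_mod_cast hap.le))
          (mul_le_mul_of_nonneg_left hNu₂ (by exact_mod_cast hbp.le))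

end
end

section
/- Let u be a utility function with u(1) = 0 and let (fₙ) be a sequence of densities on a probability space (Ω, Σ, μ). If N_u(fₙ) → 0 as n → ∞, then fₙ → 1 in L¹(μ). -/
open MeasureTheory Filter Set Topology
open scoped ENNReal

noncomputable section

variable {Ω : Type*} [MeasurableSpace Ω]

lemma coe_toReal_ennreal {p : ℝ≥0∞} (hp : p ≠ ⊤) : ((p.toReal : ℝ) : EReal) = (p : EReal) := by
  rw [← EReal.toReal_coe_ennreal]
  exact EReal.coe_toReal (by simp [hp]) (by simp)

lemma eInt_eq (μ : Measure Ω) {g : Ω → ℝ} (hg : Integrable g μ) :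
    eInt μ g = ((∫ x, g x ∂μ : ℝ) : EReal) := by
  have hfin : ∫⁻ x, (‖g x‖₊ : ℝ≥0∞) ∂μ < ⊤ := hg.hasFiniteIntegral
  have hp : ∫⁻ x, ENNReal.ofReal (g x) ∂μ ≠ ⊤ := by
    refine ne_top_of_le_ne_top hfin.ne (lintegral_mono fun x => ?_)
    exact Real.ofReal_le_enorm _
  have hn : ∫⁻ x, ENNReal.ofReal (-(g x)) ∂μ ≠ ⊤ := by
    refine ne_top_of_le_ne_top hfin.ne (lintegral_mono fun x => ?_)
    calc ENNReal.ofReal (-(g x)) ≤ (‖-(g x)‖₊ : ℝ≥0∞) := Real.ofReal_le_enorm _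
    _ = (‖g x‖₊ : ℝ≥0∞) := by rw [nnnorm_neg]
  rw [integral_eq_lintegral_pos_part_sub_lintegral_neg_part hg, eInt, EReal.coe_sub,
    coe_toReal_ennreal hp, coe_toReal_ennreal hn]

lemma deriv_one_pos (u : ℝ → ℝ) (hu : IsUtility u) (hu1 : u 1 = 0) : 0 < deriv u 1 := by
  have h1 : (1:ℝ) ∈ Set.Ioi (0:ℝ) := by norm_num
  have h2 : (2:ℝ) ∈ Set.Ioi (0:ℝ) := by norm_num
  have hs : slope u 1 2 ≤ deriv u 1 :=
    hu.1.concaveOn.slope_le_deriv h1 h2 one_lt_two (hu.2.2.1 1 h1)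
  have hu2 : 0 < u 2 := hu1 ▸ hu.2.1 h1 h2 one_lt_two
  rw [slope_def_field] at hs
  rw [hu1] at hs
  norm_num at hs
  linarith

lemma choose_eps (u : ℝ → ℝ) (hu : IsUtility u) (hu1 : u 1 = 0) {δ : ℝ} (hδ : 0 < δ) :
    ∃ ε : ℝ, 0 < ε ∧ ε < δ/4 ∧
      0 < δ/2 * u (1+ε) + min 0 (u (1+ε) + u (1 - ε*(2/δ)) * (δ/2)) := by
  set d := deriv u 1 with hd_def
  have hd : HasDerivAt u d 1 := (hu.2.2.1 1 (by norm_num)).hasDerivAt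
  have hdpos : 0 < d := deriv_one_pos u hu hu1
  set K : ℝ := 2/δ with hK_def
  have hKpos : 0 < K := by positivity
  set X : ℝ → ℝ := fun z => u (1+z) + u (1 - z*K) * (δ/2) with hX_def
  set Y : ℝ → ℝ := fun z => δ/2 * u (1+z) with hY_def
  -- derivatives at 0
  have hinner1 : HasDerivAt (fun z : ℝ => 1 + z) 1 0 := (hasDerivAt_id 0).const_add 1
  have hd1 : HasDerivAt u d (1 + 0) := by rwa [add_zero]
  have h1 : HasDerivAt (fun z : ℝ => u (1+z)) d 0 := by
    have := hd1.comp 0 hinner1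
    rw [mul_one] at this
    exact this
  have hinner2 : HasDerivAt (fun z : ℝ => 1 - z*K) (-K) 0 := by
    simpa using ((hasDerivAt_id 0).mul_const K).const_sub 1
  have hd2 : HasDerivAt u d (1 - 0*K) := by rwa [zero_mul, sub_zero]
  have h2 : HasDerivAt (fun z : ℝ => u (1 - z*K)) (d * -K) 0 := hd2.comp 0 hinner2
  have hX : HasDerivAt X 0 0 := by
    have := h1.add (h2.mul_const (δ/2))
    refine this.congr_deriv ?_
    have hδ' : δ ≠ 0 := ne_of_gt hδ
    rw [hK_def]
    field_simp <;> ring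
  have hY : HasDerivAt Y (δ/2*d) 0 := by
    have := h1.const_mul (δ/2)
    convert this using 1
  set L : ℝ := δ/2*d with hL_def
  have hLpos : 0 < L := by positivity
  have hmono : 𝓝[>] (0:ℝ) ≤ 𝓝[≠] (0:ℝ) :=
    nhdsWithin_mono 0 (fun x hx => ne_of_gt hx)
  have TX : Tendsto (slope X 0) (𝓝[>] (0:ℝ)) (𝓝 0) :=
    (hasDerivAt_iff_tendsto_slope.1 hX).mono_left hmono
  have TY : Tendsto (slope Y 0) (𝓝[>] (0:ℝ)) (𝓝 L) :=
    (hasDerivAt_iff_tendsto_slope.1 hY).mono_left hmono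
  have T : Tendsto (fun z => slope Y 0 z + min 0 (slope X 0 z)) (𝓝[>] (0:ℝ))
      (𝓝 L) := by
    have := TY.add ((tendsto_const_nhds (x := (0:ℝ))).min TX)
    simpa using this
  have hev1 : ∀ᶠ z in 𝓝[>] (0:ℝ), L/2 < slope Y 0 z + min 0 (slope X 0 z) :=
    T.eventually_const_lt (by linarith)
  have hev2 : ∀ᶠ z in 𝓝[>] (0:ℝ), z < δ/4 :=
    eventually_nhdsWithin_of_eventually_nhds (eventually_lt_nhds (by positivity))
  have hev3 : ∀ᶠ z in 𝓝[>] (0:ℝ), 0 < z := eventually_mem_nhdsWithin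
  obtain ⟨ε, hε1, hε2, hε3⟩ := (hev1.and (hev2.and hev3)).exists
  refine ⟨ε, hε3, hε2, ?_⟩
  have hX0 : X 0 = 0 := by simp [hX_def, hu1]
  have hY0 : Y 0 = 0 := by simp [hY_def, hu1]
  have hsX : slope X 0 ε = X ε / ε := by rw [slope_def_field, hX0]; ring
  have hsY : slope Y 0 ε = Y ε / ε := by rw [slope_def_field, hY0]; ring
  rw [hsX, hsY] at hε1
  have hmin : min 0 (X ε / ε) = min 0 (X ε) / ε := by
    rw [← min_div_div_right (le_of_lt hε3) 0 (X ε), zero_div]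
  rw [hmin, ← add_div, lt_div_iff₀ hε3] at hε1
  have : 0 < Y ε + min 0 (X ε) := lt_of_le_of_lt (by positivity) hε1
  simpa [hY_def, hX_def, hK_def] using this

set_option maxHeartbeats 1000000 in
lemma key (μ : Measure Ω) [IsProbabilityMeasure μ] (u : ℝ → ℝ) (hu : IsUtility u)
    (hu1 : u 1 = 0) {δ : ℝ} (hδ : 0 < δ) :
    ∃ c : ℝ, 0 < c ∧ ∀ f : Ω → ℝ, IsDensity μ f → δ ≤ ∫ x, |f x - 1| ∂μ →
      (c : EReal) ≤ Nu μ u f := by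
  classical
  obtain ⟨ε, hε0, hε4, hcpos⟩ := choose_eps u hu hu1 hδ
  obtain ⟨a, ha_def⟩ : ∃ a : ℝ, a = 1 + ε := ⟨_, rfl⟩
  obtain ⟨p, hp_def⟩ : ∃ p : ℝ, p = 1 - ε*(2/δ) := ⟨_, rfl⟩
  obtain ⟨c, hc_def⟩ : ∃ c : ℝ, c = δ/2 * u a + min 0 (u a + u p * (δ/2)) := ⟨_, rfl⟩
  rw [← ha_def, ← hp_def, ← hc_def] at hcpos
  have hεK : ε*(2/δ) < 1/2 := by
    have h1 : ε*(2/δ) < (δ/4)*(2/δ) := by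
      apply mul_lt_mul_of_pos_right hε4 (by positivity)
    have h2 : (δ/4)*(2/δ) = 1/2 := by field_simp; ring
    linarith
  have hp_half : (1:ℝ)/2 < p := by rw [hp_def]; linarith
  refine ⟨c, hcpos, ?_⟩
  intro f hf hD
  obtain ⟨hfm, hf0, hfi, hf1⟩ := hf
  set A : Set Ω := {x | 1 < f x} with hA_def
  have hA : MeasurableSet A := measurableSet_lt measurable_const hfm
  clear_value A
  obtain ⟨t, ht_def⟩ : ∃ t : ℝ, t = (μ A).toReal := ⟨_, rfl⟩
  obtain ⟨P, hP_def⟩ : ∃ P : ℝ, P = ∫ x in A, f x ∂μ := ⟨_, rfl⟩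
  obtain ⟨Q, hQ_def⟩ : ∃ Q : ℝ, Q = ∫ x in Aᶜ, f x ∂μ := ⟨_, rfl⟩
  have ht0 : 0 ≤ t := ht_def ▸ ENNReal.toReal_nonneg
  have ht1 : t ≤ 1 := by
    have h := prob_le_one (μ := μ) (s := A)
    have := ENNReal.toReal_mono ENNReal.one_ne_top h
    rw [ht_def]; simpa using this
  have htc : (μ Aᶜ).toReal = 1 - t := by
    rw [prob_compl_eq_one_sub hA,
      ENNReal.toReal_sub_of_le prob_le_one ENNReal.one_ne_top, ht_def]
    simp
  have hPQ : P + Q = 1 := by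
    rw [hP_def, hQ_def, integral_add_compl hA hfi, hf1]
  have hP1 : P ≤ 1 := by
    rw [hP_def, ← hf1]
    exact setIntegral_le_integral hfi (ae_of_all _ hf0)
  have hfi1 : Integrable (fun x => |f x - 1|) μ := (hfi.sub (integrable_const 1)).abs
  have hIA1 : IntegrableOn (fun _ : Ω => (1:ℝ)) A μ :=
    integrableOn_const (measure_lt_top μ A).ne
  have hIA1c : IntegrableOn (fun _ : Ω => (1:ℝ)) Aᶜ μ :=
    integrableOn_const (measure_lt_top μ Aᶜ).ne
  have hsplit : ∫ x, |f x - 1| ∂μ = (P - t) + ((1 - t) - Q) := by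
    rw [← integral_add_compl hA hfi1]
    have e1 : ∫ x in A, |f x - 1| ∂μ = P - t := by
      rw [setIntegral_congr_fun hA (g := fun x => f x - 1)
        (fun x hx => abs_of_nonneg (by simp only [hA_def, mem_setOf_eq] at hx; linarith)),
        integral_sub hfi.integrableOn hIA1, setIntegral_const]
      rw [hP_def, ht_def]; simp; rfl
    have e2 : ∫ x in Aᶜ, |f x - 1| ∂μ = (1 - t) - Q := by
      rw [setIntegral_congr_fun hA.compl (g := fun x => 1 - f x)
        (fun x hx => by
          have hx' : ¬ (1 < f x) := by
            simp only [hA_def, mem_compl_iff, mem_setOf_eq] at hx; exact hx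
          rw [abs_of_nonpos (by linarith)]; ring),
        integral_sub hIA1c hfi.integrableOn, setIntegral_const, Measure.real, htc]
      rw [hQ_def]; simp
    rw [e1, e2]
  have hs : δ/2 ≤ P - t := by
    have hQ' : Q = 1 - P := by linarith
    rw [hsplit, hQ'] at hD
    linarith
  have h1t : δ/2 ≤ 1 - t := by linarith
  have h1t0 : 0 < 1 - t := lt_of_lt_of_le (by positivity) h1t
  obtain ⟨b, hb_def⟩ : ∃ b : ℝ, b = 1 - ε*t/(1-t) := ⟨_, rfl⟩
  have hball : ε*t/(1-t) ≤ ε*(2/δ) := by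
    rw [div_le_iff₀ h1t0]
    have h3 : (1:ℝ) ≤ 2/δ*(1-t) := by
      rw [div_mul_eq_mul_div, le_div_iff₀ hδ]; linarith
    nlinarith [mul_le_mul_of_nonneg_left h3 hε0.le, mul_le_mul_of_nonneg_left ht1 hε0.le]
  have hb_half : (1:ℝ)/2 < b := by rw [hb_def]; linarith
  have hb_le1 : b ≤ 1 := by
    have h0 : 0 ≤ ε*t/(1-t) := by positivity
    rw [hb_def]; linarith
  have hmem1 : (1:ℝ) ∈ Ioi (0:ℝ) := by norm_num
  have hmema : a ∈ Ioi (0:ℝ) := by simp only [mem_Ioi]; rw [ha_def]; linarith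
  have hmemb : b ∈ Ioi (0:ℝ) := by simp only [mem_Ioi]; linarith
  have hmemp : p ∈ Ioi (0:ℝ) := by simp only [mem_Ioi]; linarith
  have hua : 0 < u a := by
    have := hu.2.1 hmem1 hmema (by rw [ha_def]; linarith)
    rwa [hu1] at this
  have hub : u b ≤ 0 := by
    have := hu.2.1.monotoneOn hmemb hmem1 hb_le1
    rwa [hu1] at this
  -- chord inequality
  obtain ⟨lam, hlam_def⟩ : ∃ lam : ℝ, lam = t*δ/(2*(1-t)) := ⟨_, rfl⟩
  have hlam0 : 0 ≤ lam := by rw [hlam_def]; positivity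
  have hlam1 : lam ≤ 1 := by
    rw [hlam_def, div_le_one (by positivity)]
    nlinarith
  have hbcomb : lam * p + (1-lam) * 1 = b := by
    rw [hlam_def, hp_def, hb_def]
    field_simp
    ring
  have hchord : lam * u p ≤ u b := by
    have h1lam : (0:ℝ) ≤ 1 - lam := by linarith
    have hsum : lam + (1 - lam) = 1 := by ring
    have h' := hu.1.concaveOn.2 hmemp hmem1 hlam0 h1lam hsum
    simp only [smul_eq_mul, hu1, mul_zero, mul_one, add_zero] at h'
    rw [show lam * p + (1-lam) = b from by rw [← hbcomb]; ring] at h'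
    simpa using h'
  have hchord2 : u p * (t*(δ/2)) ≤ u b * (1-t) := by
    have h' := mul_le_mul_of_nonneg_right hchord h1t0.le
    have he : u p * (t*(δ/2)) = lam * u p * (1-t) := by
      rw [hlam_def]; field_simp
    rw [he]; exact h'
  -- the test density w
  obtain ⟨w, hw_def⟩ : ∃ w : Ω → ℝ, w = A.piecewise (fun _ => a) (fun _ => b) := ⟨_, rfl⟩
  have hwa : ∀ x ∈ A, w x = a := fun x hx => by
    rw [hw_def]; exact Set.piecewise_eq_of_mem _ _ _ hx
  have hwb : ∀ x ∉ A, w x = b := fun x hx => by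
    rw [hw_def]; exact Set.piecewise_eq_of_notMem _ _ _ hx
  have hwm : Measurable w := by
    rw [hw_def]; exact Measurable.piecewise hA measurable_const measurable_const
  have hw0 : ∀ x, 0 ≤ w x := by
    intro x
    by_cases hx : x ∈ A
    · rw [hwa x hx]; linarith [hmema.out]
    · rw [hwb x hx]; linarith
  have hwint : Integrable w μ := by
    rw [hw_def]
    exact Integrable.piecewise hA (integrableOn_const (measure_lt_top μ A).ne)
      (integrableOn_const (measure_lt_top μ Aᶜ).ne)
  have hint_w : ∫ x, w x ∂μ = 1 := by
    rw [← integral_add_compl hA hwint]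
    have e1 : ∫ x in A, w x ∂μ = t * a := by
      rw [setIntegral_congr_fun hA (g := fun _ => a) (fun x hx => hwa x hx), setIntegral_const,
        Measure.real, ht_def, smul_eq_mul]
    have e2 : ∫ x in Aᶜ, w x ∂μ = (1-t) * b := by
      rw [setIntegral_congr_fun hA.compl (g := fun _ => b) (fun x hx => hwb x hx),
        setIntegral_const, Measure.real, htc, smul_eq_mul]
    rw [e1, e2, ha_def, hb_def]
    field_simp
    ring
  have hgw : (fun x => u (w x) * f x)
      = A.piecewise (fun x => u a * f x) (fun x => u b * f x) := by
    funext x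
    by_cases hx : x ∈ A
    · rw [Set.piecewise_eq_of_mem _ _ _ hx, hwa x hx]
    · rw [Set.piecewise_eq_of_notMem _ _ _ hx, hwb x hx]
  have hgint : Integrable (fun x => u (w x) * f x) μ := by
    rw [hgw]
    exact Integrable.piecewise hA (hfi.const_mul (u a)).integrableOn
      (hfi.const_mul (u b)).integrableOn
  have hmaxint : Integrable (fun x => max (-(u (w x))) 0 * f x) μ := by
    have e : (fun x => max (-(u (w x))) 0 * f x)
        = A.piecewise (fun x => max (-(u a)) 0 * f x) (fun x => max (-(u b)) 0 * f x) := by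
      funext x
      by_cases hx : x ∈ A
      · rw [Set.piecewise_eq_of_mem _ _ _ hx, hwa x hx]
      · rw [Set.piecewise_eq_of_notMem _ _ _ hx, hwb x hx]
    rw [e]
    exact Integrable.piecewise hA (hfi.const_mul _).integrableOn
      (hfi.const_mul _).integrableOn
  have hwAdm : w ∈ Adm μ u f := ⟨⟨hwm, hw0, hwint, hint_w⟩, hmaxint⟩
  have hval : ∫ x, u (w x) * f x ∂μ = u a * P + u b * Q := by
    rw [← integral_add_compl hA hgint]
    have e1 : ∫ x in A, u (w x) * f x ∂μ = u a * P := by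
      rw [setIntegral_congr_fun hA (g := fun x => u a * f x)
        (fun x hx => by rw [hwa x hx]), integral_const_mul, hP_def]
    have e2 : ∫ x in Aᶜ, u (w x) * f x ∂μ = u b * Q := by
      rw [setIntegral_congr_fun hA.compl (g := fun x => u b * f x)
        (fun x hx => by rw [hwb x hx]), integral_const_mul, hQ_def]
    rw [e1, e2]
  -- the value bound
  have hVc : c ≤ u a * P + u b * Q := by
    have hQ' : Q = 1 - P := by linarith
    have key1 : t * (u a + u p * (δ/2)) ≤ u a * t + u b * (1-t) := by nlinarith [hchord2]
    have key2 : min 0 (u a + u p * (δ/2)) ≤ t * (u a + u p * (δ/2)) := by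
      rcases le_or_gt 0 (u a + u p * (δ/2)) with h | h
      · rw [min_eq_left h]; exact mul_nonneg ht0 h
      · rw [min_eq_right h.le]; nlinarith
    have key3 : δ/2 * u a ≤ (P - t) * (u a - u b) := by
      nlinarith [mul_nonneg (by linarith : (0:ℝ) ≤ P - t - δ/2) (by linarith : (0:ℝ) ≤ u a - u b)]
    have hid : u a * P + u b * Q = (u a * t + u b * (1-t)) + (P-t)*(u a - u b) := by
      rw [hQ']; ring
    rw [hc_def, hid]
    linarith
  calc (c : EReal) ≤ ((u a * P + u b * Q : ℝ) : EReal) := EReal.coe_le_coe_iff.2 hVc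
  _ = eInt μ (fun x => u (w x) * f x) := by rw [eInt_eq μ hgint, hval]
  _ ≤ Nu μ u f := by
      rw [Nu]
      exact le_iSup₂ (f := fun w _ => eInt μ fun x => u (w x) * f x) w hwAdm

/-- if `u(1) = 0` and `N_u(fₙ) → 0`, then `fₙ → 1` in `L¹(μ)`. -/
theorem tendsto_one_of_Nu_tendsto_zero (μ : Measure Ω) [IsProbabilityMeasure μ]
    (u : ℝ → ℝ) (hu : IsUtility u) (hu1 : u 1 = 0)
    (f : ℕ → Ω → ℝ) (hf : ∀ n, IsDensity μ (f n))
    (hN : Tendsto (fun n => Nu μ u (f n)) atTop (nhds (0 : EReal))) :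
    Tendsto (fun n => ∫ x, |f n x - 1| ∂μ) atTop (nhds 0) := by
  refine tendsto_order.2 ⟨?_, ?_⟩
  · intro a' ha'
    filter_upwards with n
    have h0 : 0 ≤ ∫ x, |f n x - 1| ∂μ := integral_nonneg fun x => abs_nonneg _
    exact lt_of_lt_of_le ha' h0
  · intro a' ha'
    obtain ⟨c, hc0, hkey⟩ := key μ u hu hu1 ha'
    have hev : ∀ᶠ n in atTop, Nu μ u (f n) < (c : EReal) :=
      hN.eventually_lt_const (by exact_mod_cast hc0)
    filter_upwards [hev] with n hn
    by_contra hcon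
    push_neg at hcon
    exact absurd (hkey (f n) (hf n) hcon) (not_le.2 hn)

end
end
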